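/- Let a/b be a rational number with integers a ≥ 2b > 0. For every deterministic algorithm for hypergraph orientation under uncertainty with predictions, either its competitive ratio on instances with mandatory query distance k_M = 0 is at least a/(a−b) = 1 + 1/(a/b − 1), or its competitive ratio on instances with arbitrary k_M is at least a/b. -/
import Mathlib


open Finset

/-- Lower endpoint of vertex `v`'s interval after querying the set `Q`. -/
def qlo {V : Type*} [DecidableEq V] (L w : V → ℝ) (Q : Finset V) (v : V) : ℝ :=
  if v ∈ Q then w v else L v

/-- Upper endpoint of vertex `v`'s interval after querying the set `Q`. -/
def qhi {V : Type*} [DecidableEq V] (U w : V → ℝ) (Q : Finset V) (v : V) : ℝ :=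
  if v ∈ Q then w v else U v

/-- The query set `Q` suffices to orient the hyperedge `S`: some vertex of `S`
has its (updated) interval weakly below all other (updated) intervals of `S`. -/
def Solves {V : Type*} [DecidableEq V] (L U w : V → ℝ) (Q : Finset V) (S : Finset V) : Prop :=
  ∃ m ∈ S, ∀ u ∈ S, u ≠ m → qhi U w Q m ≤ qlo L w Q u

/-- A vertex is mandatory (for weights `w`) if it belongs to every query set
that orients all hyperedges of `E`. -/
def Mandatory {V : Type*} [DecidableEq V] (L U w : V → ℝ) (E : Finset (Finset V)) (v : V) : Prop :=
  ∀ Q : Finset V, (∀ S ∈ E, Solves L U w Q S) → v ∈ Q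

/-- A deterministic adaptive query strategy: `seq w` is the sequence of queries
the algorithm performs when the realized weights are `w`.  The `adaptive`
condition says that the `(k+1)`-st query only depends on the answers to the
first `k` queries. -/
structure DetAlg (n : ℕ) where
  seq : (Fin n → ℝ) → List (Fin n)
  nodup : ∀ w, (seq w).Nodup
  adaptive : ∀ w w' : Fin n → ℝ, ∀ k : ℕ,
    (∀ v ∈ (seq w).take k, w v = w' v) →
    (seq w).take (k + 1) = (seq w').take (k + 1)

/-- Size of a minimum feasible query set. -/
noncomputable def optSize {n : ℕ} (L U w : Fin n → ℝ) (E : Finset (Finset (Fin n))) : ℕ :=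
  sInf {k : ℕ | ∃ Q : Finset (Fin n), Q.card = k ∧ ∀ S ∈ E, Solves L U w Q S}

section helpers
variable {V : Type*} [DecidableEq V]

lemma not_mem_take_indexOf (l : List V) (x : V) :
    x ∉ l.take (l.idxOf x) := by
  induction l with
  | nil => simp
  | cons hd tl ih =>
    by_cases h : x = hd
    · subst h; simp [List.idxOf_cons_self]
    · rw [List.idxOf_cons_ne _ (Ne.symm h)]
      simp only [Nat.succ_eq_add_one, List.take_succ_cons, List.mem_cons]
      rintro (rfl | hx)
      · exact h rfl
      · exact ih hx

lemma mem_take_of_indexOf_lt {l : List V} {x : V} (hx : x ∈ l)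
    {n : ℕ} (hn : l.idxOf x < n) : x ∈ l.take n := by
  induction l generalizing n with
  | nil => simp at hx
  | cons hd tl ih =>
    cases n with
    | zero => omega
    | succ m =>
      by_cases h : x = hd
      · subst h; simp
      · have hx' : x ∈ tl := by
          rcases List.mem_cons.mp hx with rfl | h'
          · exact absurd rfl h
          · exact h'
        have hn' : tl.idxOf x < m := by
          rw [List.idxOf_cons_ne _ (Ne.symm h)] at hn; omega
        simp only [List.take_succ_cons, List.mem_cons]
        exact Or.inr (ih hx' hn')

/-- If the distinguished left vertex is unqueried, all of `T` must be queried. -/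
lemma forceR_of_notMem {L U w : V → ℝ} {Q : Finset V} {i : V} {T : Finset V}
    (hiT : i ∉ T) (hiQ : i ∉ Q) (hLi : L i = 0) (hUi : U i = 2)
    (hT : ∀ u ∈ T, L u = 1 ∧ U u = 3 ∧ 0 < w u)
    (h : Solves L U w Q (insert i T)) : T ⊆ Q := by
  obtain ⟨m, hmS, hmin⟩ := h
  rcases Finset.mem_insert.mp hmS with rfl | hmT
  · intro u hu
    have hui : u ≠ m := fun e => hiT (e ▸ hu)
    have h2 := hmin u (Finset.mem_insert_of_mem hu) hui
    by_contra huQ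
    rw [qhi, if_neg hiQ, hUi, qlo, if_neg huQ, (hT u hu).1] at h2
    linarith
  · have hne : i ≠ m := fun e => hiT (e ▸ hmT)
    have h2 := hmin i (Finset.mem_insert_self _ _) hne
    rw [qlo, if_neg hiQ, hLi, qhi] at h2
    obtain ⟨-, hU3, hw⟩ := hT m hmT
    exfalso
    by_cases hmQ : m ∈ Q
    · rw [if_pos hmQ] at h2; linarith
    · rw [if_neg hmQ, hU3] at h2; linarith

/-- If the distinguished left vertex has a "middle" value (in (1,2)), all of
`T` must be queried regardless of whether `i` is queried. -/
lemma forceR_of_mid {L U w : V → ℝ} {Q : Finset V} {i : V} {T : Finset V}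
    (hiT : i ∉ T) (hLi : L i = 0) (hUi : U i = 2)
    (hwi1 : 1 < w i) (hwi2 : w i < 2)
    (hT : ∀ u ∈ T, L u = 1 ∧ U u = 3 ∧ 1 < w u ∧ w u < 3)
    (h : Solves L U w Q (insert i T)) : T ⊆ Q := by
  obtain ⟨m, hmS, hmin⟩ := h
  rcases Finset.mem_insert.mp hmS with rfl | hmT
  · -- m = i : qhi i > 1, so every u ∈ T has qlo u > 1, hence queried
    intro u hu
    have hui : u ≠ m := fun e => hiT (e ▸ hu)
    have h2 := hmin u (Finset.mem_insert_of_mem hu) hui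
    by_contra huQ
    rw [qlo, if_neg huQ, (hT u hu).1, qhi] at h2
    by_cases hmQ : m ∈ Q
    · rw [if_pos hmQ] at h2; linarith
    · rw [if_neg hmQ, hUi] at h2; linarith
  · -- m ∈ T
    have hne : i ≠ m := fun e => hiT (e ▸ hmT)
    have hmQ : m ∈ Q := by
      by_contra hmQ
      have h2 := hmin i (Finset.mem_insert_self _ _) hne
      rw [qhi, if_neg hmQ, (hT m hmT).2.1, qlo] at h2
      by_cases hiQ : i ∈ Q
      · rw [if_pos hiQ] at h2; linarith
      · rw [if_neg hiQ, hLi] at h2; linarith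
    intro u hu
    by_cases hum : u = m
    · exact hum ▸ hmQ
    · have h2 := hmin u (Finset.mem_insert_of_mem hu) hum
      by_contra huQ
      rw [qhi, if_pos hmQ, qlo, if_neg huQ, (hT u hu).1] at h2
      linarith [(hT m hmT).2.2.1]

/-- Infeasibility: `i` unqueried while some `r ∈ T` is queried with low value. -/
lemma not_solves_low {L U w : V → ℝ} {Q : Finset V} {i : V} {T : Finset V}
    (hiT : i ∉ T) (hiQ : i ∉ Q) (hLi : L i = 0) (hUi : U i = 2)
    (hT : ∀ u ∈ T, U u = 3 ∧ 0 < w u)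
    {r : V} (hrT : r ∈ T) (hrQ : r ∈ Q) (hwr : w r < 2) :
    ¬ Solves L U w Q (insert i T) := by
  rintro ⟨m, hmS, hmin⟩
  rcases Finset.mem_insert.mp hmS with rfl | hmT
  · have hri : r ≠ m := fun e => hiT (e ▸ hrT)
    have h2 := hmin r (Finset.mem_insert_of_mem hrT) hri
    rw [qhi, if_neg hiQ, hUi, qlo, if_pos hrQ] at h2
    linarith
  · have hne : i ≠ m := fun e => hiT (e ▸ hmT)
    have h2 := hmin i (Finset.mem_insert_self _ _) hne
    rw [qlo, if_neg hiQ, hLi, qhi] at h2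
    obtain ⟨hU3, hw⟩ := hT m hmT
    by_cases hmQ : m ∈ Q
    · rw [if_pos hmQ] at h2; linarith
    · rw [if_neg hmQ, hU3] at h2; linarith

/-- Feasibility witness: `i` unqueried, all of `T` queried with high values. -/
lemma solves_of_high {L U w : V → ℝ} {Q : Finset V} {i : V} {T : Finset V}
    (hiT : i ∉ T) (hiQ : i ∉ Q) (hUi : U i = 2)
    (hT : ∀ u ∈ T, u ∈ Q ∧ 2 ≤ w u) : Solves L U w Q (insert i T) := by
  refine ⟨i, Finset.mem_insert_self _ _, ?_⟩
  intro u hu hui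
  have huT : u ∈ T := by
    rcases Finset.mem_insert.mp hu with rfl | h
    · exact absurd rfl hui
    · exact h
  rw [qhi, if_neg hiQ, hUi, qlo, if_pos (hT u huT).1]
  exact (hT u huT).2

/-- Feasibility witness: `i` queried with a low value, `T` unqueried. -/
lemma solves_of_low {L U w : V → ℝ} {Q : Finset V} {i : V} {T : Finset V}
    (hiQ : i ∈ Q) (hwi : w i ≤ 1)
    (hT : ∀ u ∈ T, u ∉ Q ∧ L u = 1) : Solves L U w Q (insert i T) := by
  refine ⟨i, Finset.mem_insert_self _ _, ?_⟩
  intro u hu hui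
  have huT : u ∈ T := by
    rcases Finset.mem_insert.mp hu with rfl | h
    · exact absurd rfl hui
    · exact h
  rw [qhi, if_pos hiQ, qlo, if_neg (hT u huT).1, (hT u huT).2]
  exact hwi

end helpers

open scoped Classical in
/-- Lower bound w.r.t. the mandatory query distance: on the hard family of
instances, any deterministic algorithm has competitive ratio at least
`a/(a-b)` on some realization with `k_M = 0`, or at least `a/b` on some
realization with arbitrary `k_M`. -/
theorem stmt15 (a b : ℕ) (hb : 0 < b) (hab : 2 * b ≤ a)
    (L U pw : Fin a → ℝ)
    (hleft : ∀ i : Fin a, (i : ℕ) < b → L i = 0 ∧ U i = 2 ∧ pw i = 1.5)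
    (hright : ∀ i : Fin a, b ≤ (i : ℕ) → L i = 1 ∧ U i = 3 ∧ pw i = 2.5)
    (E : Finset (Finset (Fin a)))
    (hE : E = (Finset.univ.filter (fun i : Fin a => (i : ℕ) < b)).image
        (fun i => insert i (Finset.univ.filter (fun j : Fin a => b ≤ (j : ℕ)))))
    (A : DetAlg a)
    (hfeas : ∀ w : Fin a → ℝ, (∀ i, w i ∈ Set.Ioo (L i) (U i)) →
      ∀ S ∈ E, Solves L U w (A.seq w).toFinset S) :
    (∃ w : Fin a → ℝ, (∀ i, w i ∈ Set.Ioo (L i) (U i)) ∧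
        (symmDiff (Finset.univ.filter (Mandatory L U pw E))
                  (Finset.univ.filter (Mandatory L U w E))).card = 0 ∧
        ((a : ℝ) / ((a : ℝ) - (b : ℝ))) * (optSize L U w E : ℝ) ≤ ((A.seq w).length : ℝ)) ∨
    (∃ w : Fin a → ℝ, (∀ i, w i ∈ Set.Ioo (L i) (U i)) ∧
        ((a : ℝ) / (b : ℝ)) * (optSize L U w E : ℝ) ≤ ((A.seq w).length : ℝ)) := by
  classical
  have hba : b ≤ a := by omega
  have hblta : b < a := by omega
  have ha0 : 0 < a := by omega
  set Lfin : Finset (Fin a) := Finset.univ.filter (fun i : Fin a => (i : ℕ) < b) with hLfin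
  set Rfin : Finset (Fin a) := Finset.univ.filter (fun j : Fin a => b ≤ (j : ℕ)) with hRfin
  subst hE
  have hmemL : ∀ i : Fin a, i ∈ Lfin ↔ (i : ℕ) < b := by
    intro i; simp [hLfin]
  have hmemR : ∀ i : Fin a, i ∈ Rfin ↔ b ≤ (i : ℕ) := by
    intro i; simp [hRfin]
  have hLR : ∀ i, i ∈ Lfin → i ∉ Rfin := by
    intro i hi hir
    have h1 := (hmemL i).1 hi
    have h2 := (hmemR i).1 hir
    omega
  -- cardinalities
  have cardL : Lfin.card = b := by
    have h1 : Lfin = (Finset.univ : Finset (Fin b)).image (fun i => Fin.castLE hba i) := by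
      ext j
      constructor
      · intro hj
        exact Finset.mem_image.mpr ⟨⟨(j : ℕ), (hmemL j).1 hj⟩, Finset.mem_univ _, Fin.ext rfl⟩
      · intro hj
        obtain ⟨i, -, rfl⟩ := Finset.mem_image.mp hj
        exact (hmemL _).2 (by simp)
    rw [h1, Finset.card_image_of_injective _ (Fin.castLE_injective hba)]
    simp
  have cardR : Rfin.card = a - b := by
    have h2 : Lfin.card + Rfin.card = a := by
      have h3 : Rfin = Finset.univ.filter (fun i : Fin a => ¬ (i : ℕ) < b) := by
        ext j; simp [hRfin, not_lt]
      rw [hLfin, h3]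
      rw [Finset.card_filter_add_card_filter_not]
      simp
    omega
  -- interval data
  have hLl : ∀ i ∈ Lfin, L i = 0 ∧ U i = 2 := by
    intro i hi
    obtain ⟨h1, h2, -⟩ := hleft i ((hmemL i).1 hi)
    exact ⟨h1, h2⟩
  have hRr : ∀ u ∈ Rfin, L u = 1 ∧ U u = 3 := by
    intro u hu
    obtain ⟨h1, h2, -⟩ := hright u ((hmemR u).1 hu)
    exact ⟨h1, h2⟩
  -- the base realization
  set w0 : Fin a → ℝ := fun i => if (i : ℕ) < b then 0.9 else 2.5 with hw0
  have hbox0 : ∀ i, w0 i ∈ Set.Ioo (L i) (U i) := by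
    intro i
    by_cases h : (i : ℕ) < b
    · obtain ⟨h1, h2, -⟩ := hleft i h
      have hv : w0 i = 0.9 := by rw [hw0]; simp [h]
      rw [Set.mem_Ioo, hv, h1, h2]
      norm_num
    · obtain ⟨h1, h2, -⟩ := hright i (le_of_not_gt h)
      have hv : w0 i = 2.5 := by rw [hw0]; simp [h]
      rw [Set.mem_Ioo, hv, h1, h2]
      norm_num
  set l0 : List (Fin a) := A.seq w0 with hl0
  -- zero vertex, a left vertex
  have hz : ((⟨0, ha0⟩ : Fin a) : ℕ) < b := hb
  have hzL : (⟨0, ha0⟩ : Fin a) ∈ Lfin := (hmemL _).2 hz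
  have hLne : Lfin.Nonempty := ⟨_, hzL⟩
  have hRne : Rfin.Nonempty := by
    rw [← Finset.card_pos, cardR]; omega
  have hSmem : ∀ i ∈ Lfin, insert i Rfin ∈ Lfin.image (fun i => insert i Rfin) :=
    fun i hi => Finset.mem_image_of_mem _ hi
  by_cases hX : ∀ j ∈ Lfin, j ∈ l0.toFinset
  · -- CASE X : the algorithm queries all left vertices on w0.
    left
    obtain ⟨ib, hibL, hmax⟩ := Finset.exists_max_image Lfin (fun j => l0.idxOf j) hLne
    have hibR : ib ∉ Rfin := hLR ib hibL
    obtain ⟨hLib, hUib⟩ := hLl ib hibL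
    set p : ℕ := l0.idxOf ib with hp
    set w1 : Fin a → ℝ := Function.update w0 ib 1.5 with hw1
    have hw1ib : w1 ib = 1.5 := by rw [hw1]; simp
    have hw1R : ∀ u ∈ Rfin, w1 u = 2.5 := by
      intro u hu
      have : u ≠ ib := fun e => hibR (e ▸ hu)
      rw [hw1, Function.update_of_ne this, hw0]
      simp [not_lt.mpr ((hmemR u).1 hu)]
    have hbox1 : ∀ i, w1 i ∈ Set.Ioo (L i) (U i) := by
      intro i
      by_cases h : i = ib
      · subst h
        rw [hw1ib]
        constructor
        · rw [hLib]; norm_num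
        · rw [hUib]; norm_num
      · rw [hw1, Function.update_of_ne h]; exact hbox0 i
    have hagree : ∀ v ∈ l0.take p, w0 v = w1 v := by
      intro v hv
      have hne : v ≠ ib := by
        rintro rfl
        exact not_mem_take_indexOf l0 v hv
      rw [hw1, Function.update_of_ne hne]
    have htake : l0.take (p + 1) = (A.seq w1).take (p + 1) := A.adaptive w0 w1 p hagree
    set Q1 : Finset (Fin a) := (A.seq w1).toFinset with hQ1
    have hLQ1 : ∀ j ∈ Lfin, j ∈ Q1 := by
      intro j hj
      have hjl0 : j ∈ l0 := List.mem_toFinset.mp (hX j hj)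
      have hjt : j ∈ l0.take (p + 1) := by
        refine mem_take_of_indexOf_lt hjl0 ?_
        have := hmax j hj
        omega
      rw [htake] at hjt
      exact List.mem_toFinset.mpr (List.take_subset _ _ hjt)
    have hsolve1 := hfeas w1 hbox1
    have hT1 : ∀ u ∈ Rfin, L u = 1 ∧ U u = 3 ∧ 1 < w1 u ∧ w1 u < 3 := by
      intro u hu
      obtain ⟨h1, h2⟩ := hRr u hu
      rw [hw1R u hu]
      refine ⟨h1, h2, by norm_num, by norm_num⟩
    have hforce1 : ∀ Q : Finset (Fin a),
        (∀ S ∈ Lfin.image (fun i => insert i Rfin), Solves L U w1 Q S) → Rfin ⊆ Q := by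
      intro Q hQ
      exact forceR_of_mid hibR hLib hUib (by rw [hw1ib]; norm_num) (by rw [hw1ib]; norm_num)
        hT1 (hQ _ (hSmem ib hibL))
    have hRQ1 : Rfin ⊆ Q1 := hforce1 Q1 hsolve1
    have huniv : (Finset.univ : Finset (Fin a)) ⊆ Q1 := by
      intro v _
      by_cases h : (v : ℕ) < b
      · exact hLQ1 v ((hmemL v).2 h)
      · exact hRQ1 ((hmemR v).2 (le_of_not_gt h))
    have hlenN : a ≤ (A.seq w1).length := by
      calc a = (Finset.univ : Finset (Fin a)).card := by simp
        _ ≤ Q1.card := Finset.card_le_card huniv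
        _ ≤ (A.seq w1).length := List.toFinset_card_le _
    -- Rfin is feasible for w1
    have hfeasR1 : ∀ S ∈ Lfin.image (fun i => insert i Rfin), Solves L U w1 Rfin S := by
      intro S hS
      obtain ⟨i, hiL, rfl⟩ := Finset.mem_image.mp hS
      refine solves_of_high (hLR i hiL) (hLR i hiL) (hLl i hiL).2 ?_
      intro u hu
      exact ⟨hu, by rw [hw1R u hu]; norm_num⟩
    -- optSize for w1 is a - b
    have hopt1 : optSize L U w1 (Lfin.image fun i => insert i Rfin) = a - b := by
      have hmem : a - b ∈ {k : ℕ | ∃ Q : Finset (Fin a), Q.card = k ∧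
          ∀ S ∈ Lfin.image (fun i => insert i Rfin), Solves L U w1 Q S} :=
        ⟨Rfin, cardR, hfeasR1⟩
      unfold optSize
      refine le_antisymm (Nat.sInf_le hmem) (le_csInf ⟨_, hmem⟩ ?_)
      rintro k ⟨Q, rfl, hQ⟩
      calc a - b = Rfin.card := cardR.symm
        _ ≤ Q.card := Finset.card_le_card (hforce1 Q hQ)
    -- Mandatory sets coincide (both are Rfin)
    have hfeasRpw : ∀ S ∈ Lfin.image (fun i => insert i Rfin), Solves L U pw Rfin S := by
      intro S hS
      obtain ⟨i, hiL, rfl⟩ := Finset.mem_image.mp hS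
      refine solves_of_high (hLR i hiL) (hLR i hiL) (hLl i hiL).2 ?_
      intro u hu
      exact ⟨hu, by rw [(hright u ((hmemR u).1 hu)).2.2]; norm_num⟩
    have hTpw : ∀ u ∈ Rfin, L u = 1 ∧ U u = 3 ∧ 1 < pw u ∧ pw u < 3 := by
      intro u hu
      obtain ⟨h1, h2⟩ := hRr u hu
      rw [(hright u ((hmemR u).1 hu)).2.2]
      refine ⟨h1, h2, by norm_num, by norm_num⟩
    have hMpw : ∀ v, Mandatory L U pw (Lfin.image fun i => insert i Rfin) v ↔ v ∈ Rfin := by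
      intro v
      constructor
      · intro hM; exact hM Rfin hfeasRpw
      · intro hv Q hQ
        have hRQ : Rfin ⊆ Q := by
          refine forceR_of_mid (hLR _ hzL) (hLl _ hzL).1 (hLl _ hzL).2 ?_ ?_ hTpw
            (hQ _ (hSmem _ hzL))
          · rw [(hleft _ hz).2.2]; norm_num
          · rw [(hleft _ hz).2.2]; norm_num
        exact hRQ hv
    have hMw1 : ∀ v, Mandatory L U w1 (Lfin.image fun i => insert i Rfin) v ↔ v ∈ Rfin := by
      intro v
      constructor
      · intro hM; exact hM Rfin hfeasR1
      · intro hv Q hQ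
        exact hforce1 Q hQ hv
    have hfeq : (Finset.univ.filter (Mandatory L U pw (Lfin.image fun i => insert i Rfin)))
        = (Finset.univ.filter (Mandatory L U w1 (Lfin.image fun i => insert i Rfin))) := by
      ext v
      simp only [Finset.mem_filter, Finset.mem_univ, true_and]
      rw [hMpw v, hMw1 v]
    refine ⟨w1, hbox1, ?_, ?_⟩
    · rw [hfeq, symmDiff_self]
      simp
    · rw [hopt1]
      rw [Nat.cast_sub hba]
      have hne : (a : ℝ) - (b : ℝ) ≠ 0 := by
        have : (b : ℝ) < (a : ℝ) := by exact_mod_cast hblta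
        linarith
      rw [div_mul_cancel₀ _ hne]
      exact_mod_cast hlenN
  · -- CASE Y : some left vertex is never queried on w0.
    right
    push_neg at hX
    obtain ⟨istar, histL, histQ⟩ := hX
    have hsolve0 := hfeas w0 hbox0
    have hT0 : ∀ u ∈ Rfin, L u = 1 ∧ U u = 3 ∧ 0 < w0 u := by
      intro u hu
      obtain ⟨h1, h2⟩ := hRr u hu
      refine ⟨h1, h2, ?_⟩
      rw [hw0]; simp only [not_lt.mpr ((hmemR u).1 hu), if_false]; norm_num
    have hRQ0 : Rfin ⊆ l0.toFinset := by
      refine forceR_of_notMem (hLR _ histL) histQ (hLl _ histL).1 (hLl _ histL).2 hT0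
        (hsolve0 _ (hSmem _ histL))
    obtain ⟨rb, hrbR, hmax⟩ := Finset.exists_max_image Rfin (fun j => l0.idxOf j) hRne
    set q : ℕ := l0.idxOf rb with hq
    set w2 : Fin a → ℝ := Function.update w0 rb 1.2 with hw2
    have hw2rb : w2 rb = 1.2 := by rw [hw2]; simp
    have hw2L : ∀ i ∈ Lfin, w2 i = 0.9 := by
      intro i hi
      have hne : i ≠ rb := fun e => (hLR i hi) (e ▸ hrbR)
      rw [hw2, Function.update_of_ne hne, hw0]
      simp [(hmemL i).1 hi]
    have hbox2 : ∀ i, w2 i ∈ Set.Ioo (L i) (U i) := by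
      intro i
      by_cases h : i = rb
      · subst h
        obtain ⟨h1, h2⟩ := hRr i hrbR
        rw [hw2rb]
        constructor
        · rw [h1]; norm_num
        · rw [h2]; norm_num
      · rw [hw2, Function.update_of_ne h]; exact hbox0 i
    have hagree : ∀ v ∈ l0.take q, w0 v = w2 v := by
      intro v hv
      have hne : v ≠ rb := by
        rintro rfl
        exact not_mem_take_indexOf l0 v hv
      rw [hw2, Function.update_of_ne hne]
    have htake : l0.take (q + 1) = (A.seq w2).take (q + 1) := A.adaptive w0 w2 q hagree
    set Q2 : Finset (Fin a) := (A.seq w2).toFinset with hQ2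
    have hRQ2 : ∀ u ∈ Rfin, u ∈ Q2 := by
      intro u hu
      have hul0 : u ∈ l0 := List.mem_toFinset.mp (hRQ0 hu)
      have hut : u ∈ l0.take (q + 1) := by
        refine mem_take_of_indexOf_lt hul0 ?_
        have := hmax u hu
        omega
      rw [htake] at hut
      exact List.mem_toFinset.mpr (List.take_subset _ _ hut)
    have hsolve2 := hfeas w2 hbox2
    have hT2 : ∀ u ∈ Rfin, U u = 3 ∧ 0 < w2 u := by
      intro u hu
      refine ⟨(hRr u hu).2, ?_⟩
      by_cases h : u = rb
      · subst h; rw [hw2rb]; norm_num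
      · rw [hw2, Function.update_of_ne h, hw0]
        simp only [not_lt.mpr ((hmemR u).1 hu), if_false]; norm_num
    have hLQ2 : ∀ i ∈ Lfin, i ∈ Q2 := by
      intro i hiL
      by_contra h
      exact not_solves_low (hLR i hiL) h (hLl i hiL).1 (hLl i hiL).2 hT2 hrbR
        (hRQ2 rb hrbR) (by rw [hw2rb]; norm_num) (hsolve2 _ (hSmem i hiL))
    have huniv : (Finset.univ : Finset (Fin a)) ⊆ Q2 := by
      intro v _
      by_cases h : (v : ℕ) < b
      · exact hLQ2 v ((hmemL v).2 h)
      · exact hRQ2 v ((hmemR v).2 (le_of_not_gt h))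
    have hlenN : a ≤ (A.seq w2).length := by
      calc a = (Finset.univ : Finset (Fin a)).card := by simp
        _ ≤ Q2.card := Finset.card_le_card huniv
        _ ≤ (A.seq w2).length := List.toFinset_card_le _
    -- Lfin is feasible for w2
    have hfeasL2 : ∀ S ∈ Lfin.image (fun i => insert i Rfin), Solves L U w2 Lfin S := by
      intro S hS
      obtain ⟨i, hiL, rfl⟩ := Finset.mem_image.mp hS
      refine solves_of_low hiL (by rw [hw2L i hiL]; norm_num) ?_
      intro u hu
      exact ⟨fun huL => (hLR u huL) hu, (hRr u hu).1⟩
    have hopt2 : optSize L U w2 (Lfin.image fun i => insert i Rfin) = b := by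
      have hmem : b ∈ {k : ℕ | ∃ Q : Finset (Fin a), Q.card = k ∧
          ∀ S ∈ Lfin.image (fun i => insert i Rfin), Solves L U w2 Q S} :=
        ⟨Lfin, cardL, hfeasL2⟩
      unfold optSize
      refine le_antisymm (Nat.sInf_le hmem) (le_csInf ⟨_, hmem⟩ ?_)
      rintro k ⟨Q, rfl, hQ⟩
      by_cases hc : Lfin ⊆ Q
      · calc b = Lfin.card := cardL.symm
          _ ≤ Q.card := Finset.card_le_card hc
      · obtain ⟨i, hiL, hiQ⟩ := Finset.not_subset.mp hc
        have hT2' : ∀ u ∈ Rfin, L u = 1 ∧ U u = 3 ∧ 0 < w2 u := by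
          intro u hu
          exact ⟨(hRr u hu).1, (hT2 u hu).1, (hT2 u hu).2⟩
        have hRQ : Rfin ⊆ Q :=
          forceR_of_notMem (hLR i hiL) hiQ (hLl i hiL).1 (hLl i hiL).2 hT2'
            (hQ _ (hSmem i hiL))
        calc b ≤ a - b := by omega
          _ = Rfin.card := cardR.symm
          _ ≤ Q.card := Finset.card_le_card hRQ
    refine ⟨w2, hbox2, ?_⟩
    rw [hopt2]
    have hne : (b : ℝ) ≠ 0 := by exact_mod_cast Nat.pos_iff_ne_zero.mp hb
    rw [div_mul_cancel₀ _ hne]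
    exact_mod_cast hlenN
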